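/- arXiv:1909.11231 — 4 statements merged into one kernel-verified Lean document; each statement's English description precedes it below -/
import Mathlib

section
/- Let $R$ be a commutative Noetherian ring, $M$ an $R$-module, and $x_1, \ldots, x_d$ a sequence of elements with $(x_1, \ldots, x_{d-i})M = 0$. Then for all $j, k \geq 1$ and all $\ell \geq i+1$, the natural map of Koszul cohomologies $\alpha^\ell : H^\ell(x_1^j, \ldots, x_d^j; M) \to H^\ell(x_1^{j+k}, \ldots, x_d^{j+k}; M)$ (induced by multiplication by $(x_1 \cdots x_d)^k$ on the degree-$d$ cokernel) is the zero map. -/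
open Finset

/-- Degree-`i` component of the Koszul cochain complex on `d` elements with
coefficients in `M`: functions from `i`-element subsets of `Fin d` to `M`. -/
def KoszulFun (M : Type*) (d i : ℕ) : Type _ :=
  {S : Finset (Fin d) // S.card = i} → M

instance (M : Type*) [AddCommGroup M] (d i : ℕ) : AddCommGroup (KoszulFun M d i) :=
  Pi.addCommGroup

instance (R M : Type*) [CommRing R] [AddCommGroup M] [Module R M] (d i : ℕ) :
    Module R (KoszulFun M d i) :=
  Pi.module _ _ _

/-- The Koszul differential `K^i(x; M) → K^{i+1}(x; M)`. -/
def koszulD (R : Type*) [CommRing R] (M : Type*) [AddCommGroup M] [Module R M]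
    {d : ℕ} (x : Fin d → R) (i : ℕ) :
    KoszulFun M d i →ₗ[R] KoszulFun M d (i + 1) where
  toFun f S := ∑ j ∈ S.1.attach,
    ((-1 : ℤ) ^ (S.1.filter (fun t => t < j.1)).card) • x j.1 •
      f ⟨S.1.erase j.1, by simp [Finset.card_erase_of_mem j.2, S.2]⟩
  map_add' f g := by
    funext S
    show (∑ _ ∈ _, _ : M) = (∑ _ ∈ _, _ : M) + (∑ _ ∈ _, _ : M)
    rw [← Finset.sum_add_distrib]
    refine Finset.sum_congr rfl fun j _ => ?_
    show _ • (x j.1 • (f _ + g _)) = _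
    rw [smul_add, smul_add]
  map_smul' r f := by
    funext S
    show (∑ _ ∈ _, _ : M) = r • (∑ _ ∈ _, _ : M)
    rw [Finset.smul_sum]
    refine Finset.sum_congr rfl fun j _ => ?_
    show _ • (x j.1 • (r • f _)) = r • _
    rw [smul_comm (x j.1) r, smul_comm _ r]

/-- The Koszul differential mapping into degree `i` (the zero map when `i = 0`). -/
def koszulDFrom (R : Type*) [CommRing R] (M : Type*) [AddCommGroup M] [Module R M]
    {d : ℕ} (x : Fin d → R) :
    (i : ℕ) → (KoszulFun M d (i - 1) →ₗ[R] KoszulFun M d i)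
  | 0 => 0
  | (i + 1) => koszulD R M x i

/-- The comparison chain map `K^•(x^j; M) → K^•(x^{j+k}; M)` (the tensor product of the
one-element comparison maps); on the component indexed by a subset `S` it is
multiplication by `∏_{t ∈ S} x_t^k`.  It lifts multiplication by `(x₁ ⋯ x_d)^k` on the
degree-`d` cokernel. -/
def koszulComp (R : Type*) [CommRing R] (M : Type*) [AddCommGroup M] [Module R M]
    {d : ℕ} (x : Fin d → R) (k i : ℕ) :
    KoszulFun M d i →ₗ[R] KoszulFun M d i where
  toFun f S := (∏ t ∈ S.1, x t ^ k) • f S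
  map_add' f g := by
    funext S
    show (_ : R) • (f S + g S) = (_ : R) • f S + (_ : R) • g S
    rw [smul_add]
  map_smul' r f := by
    funext S
    show (_ : R) • (r • f S) = r • ((_ : R) • f S)
    rw [smul_comm]

/-- A Koszul `i`-cocycle `f` for the sequence `x^j` is *killed at stage `k`* if its image
under the comparison map `K^i(x^j; M) → K^i(x^{j+k}; M)` is a coboundary, i.e. the class
`α^i_{M;x;j;j+k}(f)` is zero in `H^i(x^{j+k}; M)`. -/
def KoszulKilled (R : Type*) [CommRing R] (M : Type*) [AddCommGroup M] [Module R M]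
    {d : ℕ} (x : Fin d → R) (i j k : ℕ) (f : KoszulFun M d i) : Prop :=
  ∃ g : KoszulFun M d (i - 1),
    koszulDFrom R M (fun t => x t ^ (j + k)) i g = koszulComp R M x k i f

/-- The `i`-th local cohomology bound of `M` with respect to the sequence `x`:
the supremum, over all `j` and all `i`-cocycles `f` of `K^•(x^j; M)` which die in the
direct limit `H^i_{(x)}(M) = colim H^i(x^j; M)`, of the least `k` such that
`α^i_{M;x;j;j+k}(f) = 0`. -/
noncomputable def lcb (R : Type*) [CommRing R] (M : Type*) [AddCommGroup M] [Module R M]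
    {d : ℕ} (x : Fin d → R) (i : ℕ) : ℕ∞ :=
  ⨆ (j : ℕ) (f : {f : KoszulFun M d i //
      koszulD R M (fun t => x t ^ j) i f = 0 ∧ ∃ k, KoszulKilled R M x i j k f}),
    ((sInf {k : ℕ | KoszulKilled R M x i j k f.1} : ℕ) : ℕ∞)

/-- The `i`-th Koszul cohomology `H^i(x; M)` of `M` with respect to the sequence `x`. -/
abbrev koszulH (R : Type*) [CommRing R] (M : Type*) [AddCommGroup M] [Module R M]
    {d : ℕ} (x : Fin d → R) (i : ℕ) : Type _ :=
  ↥(LinearMap.ker (koszulD R M x i)) ⧸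
    (LinearMap.range (koszulDFrom R M x i)).comap (LinearMap.ker (koszulD R M x i)).subtype

/-- Let `R` be a commutative Noetherian ring, `M` an `R`-module and
`x₁, …, x_d` a sequence of elements with `(x₁, …, x_{d-i}) M = 0`.  Then for all
`j, k ≥ 1` and all `ℓ ≥ i + 1`, the natural map of Koszul cohomologies
`α^ℓ : H^ℓ(x₁^j, …, x_d^j; M) → H^ℓ(x₁^{j+k}, …, x_d^{j+k}; M)` (induced by
multiplication by `(x₁ ⋯ x_d)^k` on the degree-`d` cokernel) is the zero map; i.e.
every `ℓ`-cocycle of `K^•(x^j; M)` is sent by the comparison chain map to a coboundary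
of `K^•(x^{j+k}; M)`. -/
theorem statement1 {R : Type*} [CommRing R] [IsNoetherianRing R]
    (M : Type*) [AddCommGroup M] [Module R M] {d : ℕ} (x : Fin d → R) (i : ℕ)
    (hx : ∀ t : Fin d, (t : ℕ) < d - i → ∀ m : M, x t • m = 0)
    (j k ℓ : ℕ) (hj : 1 ≤ j) (hk : 1 ≤ k) (hℓ : i + 1 ≤ ℓ)
    (f : KoszulFun M d ℓ) (hf : koszulD R M (fun t => x t ^ j) ℓ f = 0) :
    ∃ g : KoszulFun M d (ℓ - 1),
      koszulDFrom R M (fun t => x t ^ (j + k)) ℓ g = koszulComp R M x k ℓ f := by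
  refine ⟨0, ?_⟩
  rw [map_zero]
  funext S
  show (0 : M) = (∏ t ∈ S.1, x t ^ k) • f S
  obtain ⟨t, ht, htlt⟩ : ∃ t ∈ S.1, (t : ℕ) < d - i := by
    by_contra h
    push_neg at h
    have hsub : S.1 ⊆ Finset.univ.filter (fun t : Fin d => d - i ≤ (t : ℕ)) :=
      fun t htS => by
        have := h t htS
        simp only [Finset.mem_filter, Finset.mem_univ, true_and]
        exact this
    have hcard : S.1.card ≤ (Finset.univ.filter (fun t : Fin d => d - i ≤ (t : ℕ))).card :=
      Finset.card_le_card hsub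
    have hle : (Finset.univ.filter (fun t : Fin d => d - i ≤ (t : ℕ))).card ≤
        (Finset.range i).card := by
      refine Finset.card_le_card_of_injOn (fun t => (t : ℕ) - (d - i)) ?_ ?_
      · intro t htmem
        simp only [Finset.mem_coe, Finset.mem_filter] at htmem
        have ht2 : (t : ℕ) < d := t.2
        simp only [Finset.mem_coe, Finset.mem_range]
        omega
      · intro a ha b hb hab
        simp only [Finset.mem_coe, Finset.mem_filter, Finset.mem_univ, true_and] at ha hb
        simp only at hab
        have ha2 : (a : ℕ) < d := a.2
        have hb2 : (b : ℕ) < d := b.2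
        have : (a : ℕ) = (b : ℕ) := by omega
        exact Fin.ext this
    rw [Finset.card_range] at hle
    omega
  rw [← Finset.prod_erase_mul _ _ ht, mul_smul]
  obtain ⟨k', rfl⟩ := Nat.exists_eq_add_of_le hk
  rw [pow_add, pow_one, mul_comm, mul_smul]
  rw [hx t htlt, smul_zero, smul_zero]
end

section
/- Let $R$ be a Noetherian normal domain, $K \subseteq R$ an ideal of pure height 1, and $a, c \in K$ nonzero elements such that: the principal ideal $(a)$ has primary decomposition $(a) = K \cap K'$ where $K'$ is pure height 1 with components disjoint from those of $K$, and $c$ avoids all minimal primes of $K'$. Then for every integer $i \geq 1$, $a(a,c)^{i-1}K \cap c^i K = (a c^i)$. -/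
open IsLocalRing

/-- The height of an ideal: the infimum of the heights (in the prime spectrum) of the
primes containing it. -/
noncomputable def idealHeight {R : Type*} [CommRing R] (I : Ideal R) : ℕ∞ :=
  ⨅ (P : PrimeSpectrum R) (_ : I ≤ P.asIdeal), Order.height P

/-- The depth of a module `N` over a local ring `A`: the supremum of the lengths of
weakly regular sequences on `N` consisting of elements of the maximal ideal. -/
noncomputable def moduleDepth (A : Type*) [CommRing A] [IsLocalRing A]
    (N : Type*) [AddCommGroup N] [Module A N] : ℕ∞ :=
  ⨆ (rs : {rs : List A // (∀ r ∈ rs, r ∈ maximalIdeal A) ∧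
      RingTheory.Sequence.IsWeaklyRegular N rs}), ((rs.1.length : ℕ) : ℕ∞)

/-- A Noetherian local ring is *Cohen–Macaulay* if its depth equals its Krull
dimension. -/
def IsCohenMacaulayLocalRing (A : Type*) [CommRing A] [IsLocalRing A] : Prop :=
  (moduleDepth A A : WithBot ℕ∞) = ringKrullDim A

/-- The multiplicative set of elements avoiding every minimal prime of `I`. -/
def avoidMinPrimes {R : Type*} [CommRing R] (I : Ideal R) : Submonoid R where
  carrier := {w | ∀ P ∈ I.minimalPrimes, w ∉ P}
  one_mem' := fun P hP => by
    have : P.IsPrime := hP.1.1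
    exact (Ideal.ne_top_iff_one P).mp this.ne_top
  mul_mem' := fun {a b} ha hb P hP hab => by
    have hprime : P.IsPrime := hP.1.1
    rcases hprime.mem_or_mem hab with h | h
    · exact ha P hP h
    · exact hb P hP h

/-- The `n`-th symbolic power `I^{(n)} = Iⁿ R_W ∩ R`, where `W` is the complement of the
union of the minimal primes of `I`. -/
noncomputable def symbolicPower {R : Type*} [CommRing R] (I : Ideal R) (n : ℕ) : Ideal R :=
  ((I ^ n).map (algebraMap R (Localization (avoidMinPrimes I)))).comap
    (algebraMap R (Localization (avoidMinPrimes I)))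

/-- Let `R` be a Noetherian normal domain, `K ⊆ R` an ideal of pure
height 1, and `a, c ∈ K` nonzero elements such that the principal ideal `(a)` has the
decomposition `(a) = K ∩ K'` where `K'` is pure height 1 with components disjoint from
those of `K`, and `c` avoids all minimal primes of `K'`.  Then for every `i ≥ 1`,
`a(a,c)^{i-1}K ∩ cⁱK = (a cⁱ)`. -/
theorem statement10
    (R : Type) [CommRing R] [IsNoetherianRing R] [IsDomain R] [IsIntegrallyClosed R]
    (K K' : Ideal R) (a c : R) (ha : a ∈ K) (hc : c ∈ K) (ha0 : a ≠ 0) (hc0 : c ≠ 0)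
    -- `K` and `K'` are pure height one
    (hKpure : associatedPrimes R (R ⧸ K) = K.minimalPrimes)
    (hKht : ∀ P ∈ K.minimalPrimes, idealHeight P = 1)
    (hK'pure : associatedPrimes R (R ⧸ K') = K'.minimalPrimes)
    (hK'ht : ∀ P ∈ K'.minimalPrimes, idealHeight P = 1)
    -- `(a) = K ∩ K'`, with the components of `K'` disjoint from those of `K`
    (hdecomp : Ideal.span {a} = K ⊓ K')
    (hdisj : K.minimalPrimes ∩ K'.minimalPrimes = ∅)
    -- `c` avoids every component of `K'`
    (hcK' : ∀ P ∈ K'.minimalPrimes, c ∉ P) :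
    ∀ i, 1 ≤ i →
      (Ideal.span {a} * ((Ideal.span {a} ⊔ Ideal.span {c}) ^ (i - 1) * K)) ⊓
          (Ideal.span {c ^ i} * K) =
        Ideal.span {a * c ^ i} := by
  intro i hi
  obtain ⟨j, rfl⟩ : ∃ j, i = j + 1 := ⟨i - 1, by omega⟩
  have haK' : Ideal.span {a} ≤ K' := hdecomp.le.trans inf_le_right
  apply le_antisymm
  · rintro x ⟨hx1, hx2⟩
    obtain ⟨y, hy, hxy⟩ := Ideal.mem_span_singleton_mul.mp hx1
    obtain ⟨k, hk, hxk⟩ := Ideal.mem_span_singleton_mul.mp hx2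
    -- c^i * k = a * y ∈ (a) ≤ K'
    have hck : c ^ (j + 1) * k ∈ K' := by
      rw [hxk, ← hxy]
      exact haK' (Ideal.mul_mem_right _ _ (Ideal.mem_span_singleton_self a))
    -- c is a nonzerodivisor mod K', so k ∈ K'
    have hkK' : k ∈ K' := by
      by_contra hkn
      have hne : (Ideal.Quotient.mk K' k) ≠ 0 := by
        simpa [Ideal.Quotient.eq_zero_iff_mem] using hkn
      obtain ⟨P, hP, hle⟩ := exists_le_isAssociatedPrime_of_isNoetherianRing R _ hne
      have hciP : c ^ (j + 1) ∈ P := by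
        apply hle
        rw [Submodule.mem_colon_singleton, Submodule.mem_bot]
        have : (c ^ (j + 1)) • (Ideal.Quotient.mk K' k) =
            Ideal.Quotient.mk K' (c ^ (j + 1) * k) := rfl
        rw [this, Ideal.Quotient.eq_zero_iff_mem]
        exact hck
      have hPmin : P ∈ K'.minimalPrimes := by
        rw [← hK'pure]; exact hP
      exact hcK' P hPmin (hP.isPrime.mem_of_pow_mem _ hciP)
    -- k ∈ K ⊓ K' = (a)
    have hka : k ∈ Ideal.span {a} := by
      rw [hdecomp]; exact ⟨hk, hkK'⟩
    obtain ⟨t, rfl⟩ := Ideal.mem_span_singleton'.mp hka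
    rw [Ideal.mem_span_singleton]
    exact ⟨t, by rw [← hxk]; ring⟩
  · rw [Ideal.span_singleton_le_iff_mem]
    constructor
    · apply Ideal.mem_span_singleton_mul.mpr
      refine ⟨c ^ (j + 1), ?_, rfl⟩
      have : c ^ (j + 1) = c ^ j * c := by ring
      rw [this, Nat.add_sub_cancel]
      exact Ideal.mul_mem_mul
        (Ideal.pow_mem_pow (le_sup_right (α := Ideal R) (Ideal.mem_span_singleton_self c)) j) hc
    · exact Ideal.mem_span_singleton_mul.mpr ⟨a, ha, by ring⟩
end

section
/- Let $(R, \mathfrak{m}, k)$ be a local F-finite domain of prime characteristic $p > 0$ and for each $e$ let $I_e = \{r \in R : \varphi(F^e_* r) \in \mathfrak{m} \text{ for all } \varphi \in \operatorname{Hom}_R(F^e_* R, R)\}$ be the Frobenius degeneracy ideals. Suppose $I \subseteq R$ is an $\mathfrak{m}$-primary ideal, $u \in R$, and $x \in R^\circ$ is an element such that $I_e \subseteq ((I^{[p^e]} : u^{p^e}) : x)$ and $(I^{[p^e]} : u^{p^e}) \subseteq I_e$ for all $e$. If moreover $I^{[p^e]}$ is tightly closed for all $e$, then $I_e = (I^{[p^e]}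 : u^{p^e})$ for all $e \in \mathbb{N}$. -/
/-- The Frobenius power `I^{[q]}` of an ideal: the ideal generated by the `q`-th powers
of the elements of `I`. -/
def frobPow {R : Type*} [CommRing R] (I : Ideal R) (q : ℕ) : Ideal R :=
  Ideal.span ((· ^ q) '' (I : Set R))

/-- `R°`: the set of elements avoiding every minimal prime of `R`. -/
def offMin (R : Type*) [CommRing R] : Set R :=
  {c | ∀ P ∈ minimalPrimes R, c ∉ P}

/-- The tight closure of an ideal `I` in a ring of characteristic `p`:
`z ∈ I*` iff there is `c ∈ R°` with `c z^{pᵉ} ∈ I^{[pᵉ]}` for all `e ≫ 0`. -/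
def tightClosure (p : ℕ) {R : Type*} [CommRing R] (I : Ideal R) : Set R :=
  {z | ∃ c ∈ offMin R, ∃ E : ℕ, ∀ e ≥ E, c * z ^ p ^ e ∈ frobPow I (p ^ e)}

/-- The `e`-th Frobenius degeneracy set
`Iₑ = {r ∈ R ∣ φ(F^e_* r) ∈ 𝔪 for all φ ∈ Hom_R(F^e_* R, R)}`; here an `R`-linear map
`F^e_* R → R` is an additive map `φ : R → R` with `φ(a^{pᵉ} s) = a φ(s)`. -/
def frobDegenSet (p : ℕ) (R : Type*) [CommRing R] [IsLocalRing R] (e : ℕ) : Set R :=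
  {r | ∀ φ : R →+ R, (∀ a s : R, φ (a ^ p ^ e * s) = a * φ s) →
    φ r ∈ IsLocalRing.maximalIdeal R}

lemma frobPow_pow_mem {R : Type*} [CommRing R] {I : Ideal R} {a : R} (ha : a ∈ I) (q : ℕ) :
    a ^ q ∈ frobPow I q :=
  Ideal.subset_span ⟨a, ha, rfl⟩

lemma frobPow_mul_le {R : Type*} [CommRing R] (I : Ideal R) (q q₀ : ℕ) :
    frobPow I (q * q₀) ≤ frobPow (frobPow I q) q₀ := by
  rw [frobPow, Ideal.span_le]
  rintro _ ⟨a, ha, rfl⟩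
  simpa [pow_mul] using frobPow_pow_mem (frobPow_pow_mem ha q) q₀

lemma frobDegen_pow (p : ℕ) {R : Type*} [CommRing R] [IsLocalRing R] [ExpChar R p]
    {e : ℕ} {r : R} (hr : r ∈ frobDegenSet p R e) (e₀ : ℕ) :
    r ^ p ^ e₀ ∈ frobDegenSet p R (e + e₀) := by
  intro φ hφ
  have := hr (φ.comp (iterateFrobenius R p e₀).toAddMonoidHom) ?_
  · simpa [iterateFrobenius_def] using this
  · intro a s
    show φ (iterateFrobenius R p e₀ (a ^ p ^ e * s)) = a * φ (iterateFrobenius R p e₀ s)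
    rw [iterateFrobenius_def, iterateFrobenius_def, mul_pow, ← pow_mul, ← pow_add]
    exact hφ a _


/-- Let `(R, 𝔪, k)` be a local F-finite domain of prime
characteristic `p > 0` with Frobenius degeneracy ideals `Iₑ`.  Suppose `I ⊆ R` is an
`𝔪`-primary ideal, `u ∈ R`, and `x ∈ R°` is such that `Iₑ ⊆ ((I^{[pᵉ]} : u^{pᵉ}) : x)`
and `(I^{[pᵉ]} : u^{pᵉ}) ⊆ Iₑ` for all `e`.  If moreover `I^{[pᵉ]}` is tightly closed
for all `e`, then `Iₑ = (I^{[pᵉ]} : u^{pᵉ})` for all `e ∈ ℕ`. -/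
theorem statement13 (p : ℕ) [Fact p.Prime]
    (R : Type*) [CommRing R] [IsNoetherianRing R] [IsLocalRing R] [IsDomain R]
    [CharP R p] [ExpChar R p] (hFfinite : (frobenius R p).Finite)
    (I : Ideal R) (hI : I.radical = IsLocalRing.maximalIdeal R)
    (u : R) (x : R) (hx : x ∈ offMin R)
    (h₁ : ∀ e : ℕ, frobDegenSet p R e ⊆
      ↑((Submodule.colon ((frobPow I (p ^ e)).colon (Ideal.span {u ^ p ^ e}) :
          Submodule R R) (Ideal.span {x}) : Ideal R)))
    (h₂ : ∀ e : ℕ, ↑((frobPow I (p ^ e)).colon (Ideal.span {u ^ p ^ e}) : Ideal R) ⊆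
      frobDegenSet p R e)
    (htc : ∀ e : ℕ, tightClosure p (frobPow I (p ^ e)) = ↑(frobPow I (p ^ e))) :
    ∀ e : ℕ, frobDegenSet p R e =
      ↑((frobPow I (p ^ e)).colon (Ideal.span {u ^ p ^ e}) : Ideal R) := by
  intro e
  apply Set.Subset.antisymm _ (h₂ e)
  intro r hr
  have key : u ^ p ^ e * r ∈ frobPow I (p ^ e) := by
    have mem : u ^ p ^ e * r ∈ tightClosure p (frobPow I (p ^ e)) := by
      refine ⟨x, hx, 0, fun e₀ _ => ?_⟩
      have h3 : r ^ p ^ e₀ ∈ frobDegenSet p R (e + e₀) := frobDegen_pow p hr e₀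
      have h4 := h₁ (e + e₀) h3
      rw [SetLike.mem_coe, Ideal.mem_colon_span_singleton] at h4
      rw [Ideal.mem_colon_span_singleton] at h4
      have h5 : x * (u ^ p ^ e * r) ^ p ^ e₀ = r ^ p ^ e₀ * x * u ^ p ^ (e + e₀) := by
        rw [mul_pow, ← pow_mul, ← pow_add]; ring
      rw [h5]
      exact frobPow_mul_le I (p ^ e) (p ^ e₀) (by rw [← pow_add]; exact h4)
    rwa [htc e, SetLike.mem_coe] at mem
  rw [SetLike.mem_coe, Ideal.mem_colon_span_singleton, mul_comm]
  exact key
end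

section
/- Let $R$ be a Noetherian ring, $x_1, \ldots, x_d$ a regular sequence, $J \subseteq R$ an ideal with $x_1 \in J$, and $c, r \in R$ and $e, t \geq 1$ integers such that $c r^{p^e} (x_1 x_2 \cdots x_d)^{(t-1)p^e} \in (x_1^{t-1} J, x_2^t, \ldots, x_d^t)^{[p^e]}$. Then $c r^{p^e} (x_2 \cdots x_d)^{(t-1)p^e} \in (J, x_2^t, \ldots, x_d^t)^{[p^e]}$. -/
section Aux

open Ideal

variable {R : Type*} [CommRing R]

/-- Weak regularity of a list relative to an ideal, at the level of ideals. -/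
def WRI (I : Ideal R) : List R → Prop
  | [] => True
  | z :: L => (∀ u : R, u * z ∈ I → u ∈ I) ∧ WRI (I ⊔ Ideal.span {z}) L

lemma WRI_congr {I I' : Ideal R} (h : I = I') : ∀ {L : List R}, WRI I L → WRI I' L := by
  subst h; intro L h; exact h

lemma WRI_of_top : ∀ (L : List R) {I : Ideal R}, I = ⊤ → WRI I L := by
  intro L
  induction L with
  | nil => intro I _; trivial
  | cons z L ih =>
    intro I hI
    refine ⟨fun u _ => hI ▸ Submodule.mem_top, ih ?_⟩
    rw [hI, top_sup_eq]

lemma head_pow {I : Ideal R} {z : R} (hz : ∀ u : R, u * z ∈ I → u ∈ I) :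
    ∀ (k : ℕ) (u : R), u * z ^ k ∈ I → u ∈ I := by
  intro k
  induction k with
  | zero => simpa using fun u h => h
  | succ k ih =>
    intro u hu
    have : (u * z) * z ^ k ∈ I := by rw [mul_assoc, ← pow_succ']; exact hu
    exact hz u (ih _ this)

lemma WRI_concat {y : R} : ∀ {M : List R} {I : Ideal R},
    WRI I (M ++ [y]) ↔
      WRI I M ∧ ∀ u : R, u * y ∈ I ⊔ ofList M → u ∈ I ⊔ ofList M := by
  intro M
  induction M with
  | nil =>
    intro I
    simp only [List.nil_append, WRI, ofList_nil, sup_bot_eq]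
    tauto
  | cons z M ih =>
    intro I
    show (∀ u : R, u * z ∈ I → u ∈ I) ∧ WRI (I ⊔ span {z}) (M ++ [y]) ↔ _
    rw [ih, ofList_cons, ← sup_assoc, ← and_assoc]
    rfl

lemma WRI.colon {z : R} : ∀ {L : List R} {I : Ideal R}, WRI I (z :: L) →
    ∀ u : R, u * z ∈ I ⊔ ofList L → u ∈ I ⊔ ofList L := by
  intro L
  induction L using List.reverseRecOn with
  | nil =>
    intro I h u hu
    simpa using h.1 u (by simpa using hu)
  | append_singleton M y ih =>
    intro I h u hu
    have h' : WRI I ((z :: M) ++ [y]) := h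
    rw [WRI_concat] at h'
    obtain ⟨hzM, Py⟩ := h'
    rw [ofList_append, ofList_singleton, ← sup_assoc] at hu
    obtain ⟨v, hv, w, hw, hvw⟩ := Submodule.mem_sup.mp hu
    obtain ⟨a, rfl⟩ := mem_span_singleton'.mp hw
    have hIM : I ⊔ ofList M ≤ I ⊔ ofList (z :: M) := by
      rw [ofList_cons, ← sup_assoc]
      exact sup_le_sup_right le_sup_left _
    have hay : a * y ∈ I ⊔ ofList (z :: M) := by
      have heq : a * y = u * z - v := by linear_combination hvw
      rw [heq]
      refine sub_mem ?_ (hIM hv)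
      refine Submodule.mem_sup_right ?_
      rw [ofList_cons]
      exact Submodule.mem_sup_left (mem_span_singleton'.mpr ⟨u, rfl⟩)
    have ha : a ∈ (I ⊔ ofList M) ⊔ span {z} := by
      have := Py a hay
      rwa [ofList_cons, ← sup_assoc, sup_right_comm] at this
    obtain ⟨b, hb, c, hc, hbc⟩ := Submodule.mem_sup.mp ha
    obtain ⟨k, rfl⟩ := mem_span_singleton'.mp hc
    have key : (u - k * y) * z ∈ I ⊔ ofList M := by
      have heq : (u - k * y) * z = b * y + v := by
        linear_combination -hvw - y * hbc
      rw [heq]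
      exact add_mem (Ideal.mul_mem_right y _ hb) hv
    have hu' := ih hzM (u - k * y) key
    rw [ofList_append, ofList_singleton, ← sup_assoc]
    have heq : u = (u - k * y) + k * y := by ring
    rw [heq]
    exact add_mem (Submodule.mem_sup_left hu')
      (Submodule.mem_sup_right (mem_span_singleton'.mpr ⟨k, rfl⟩))

lemma WRI.colon_pow {z : R} {L : List R} {I : Ideal R} (h : WRI I (z :: L)) :
    ∀ (k : ℕ) (u : R), u * z ^ k ∈ I ⊔ ofList L → u ∈ I ⊔ ofList L := by
  intro k
  induction k with
  | zero => simpa using fun u h => h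
  | succ k ih =>
    intro u hu
    have : (u * z) * z ^ k ∈ I ⊔ ofList L := by rw [mul_assoc, ← pow_succ']; exact hu
    exact h.colon u (ih _ this)

lemma swap_pow {I : Ideal R} {z w : R}
    (headz : ∀ u : R, u * z ∈ I → u ∈ I)
    (headw : ∀ u : R, u * w ∈ I ⊔ span {z} → u ∈ I ⊔ span {z}) :
    ∀ a : ℕ, 1 ≤ a → ∀ u : R, u * w ∈ I ⊔ span {z ^ a} → u ∈ I ⊔ span {z ^ a} := by
  intro a
  induction a with
  | zero => omega
  | succ a ih =>
    intro _ u hu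
    rcases Nat.eq_zero_or_pos a with h1 | ha
    · subst h1; simpa [pow_one] using headw u (by simpa [pow_one] using hu)
    · 
      -- u * w ∈ I ⊔ (z^(a+1)) ⊆ I ⊔ (z^a)
      have hle : (span {z ^ (a + 1)} : Ideal R) ≤ span {z ^ a} := by
        rw [span_singleton_le_span_singleton]
        exact ⟨z, by ring⟩
      have hu' : u * w ∈ I ⊔ span {z ^ a} := (sup_le_sup_left hle I) hu
      have husup := ih ha u hu'
      obtain ⟨i1, hi1, c', hc', hcc⟩ := Submodule.mem_sup.mp husup
      obtain ⟨c, rfl⟩ := mem_span_singleton'.mp hc'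
      obtain ⟨j1, hj1, d', hd', hdd⟩ := Submodule.mem_sup.mp hu
      obtain ⟨d, rfl⟩ := mem_span_singleton'.mp hd'
      have key : (c * w - d * z) * z ^ a ∈ I := by
        have heq : (c * w - d * z) * z ^ a = j1 - i1 * w := by
          have e1 : i1 + c * z ^ a = u := hcc
          have e2 : j1 + d * z ^ (a + 1) = u * w := hdd
          linear_combination w * e1 - e2
        rw [heq]
        exact sub_mem hj1 (Ideal.mul_mem_right w _ hi1)
      have hc2 : c * w - d * z ∈ I := head_pow headz a _ key
      have hc3 : c ∈ I ⊔ span {z} := headw c <| by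
        have heq : c * w = (c * w - d * z) + d * z := by ring
        rw [heq]
        exact add_mem (Submodule.mem_sup_left hc2)
          (Submodule.mem_sup_right (mem_span_singleton'.mpr ⟨d, rfl⟩))
      obtain ⟨i2, hi2, e', he', hee⟩ := Submodule.mem_sup.mp hc3
      obtain ⟨e, rfl⟩ := mem_span_singleton'.mp he'
      have : u = (i1 + i2 * z ^ a) + (e * z ^ (a + 1)) := by
        have e1 : i1 + c * z ^ a = u := hcc
        have e3 : i2 + e * z = c := hee
        linear_combination -e1 - z ^ a * e3
      rw [this]
      refine add_mem (Submodule.mem_sup_left (add_mem hi1 (Ideal.mul_mem_right _ _ hi2)))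
        (Submodule.mem_sup_right (mem_span_singleton'.mpr ⟨e, rfl⟩))

lemma WRI.pow_tail {z : R} {a : ℕ} (ha : 1 ≤ a) :
    ∀ {L : List R} {I : Ideal R}, WRI I (z :: L) → WRI (I ⊔ span {z ^ a}) L := by
  intro L
  induction L with
  | nil => intro I _; trivial
  | cons w L' ih =>
    intro I h
    obtain ⟨headz, headw, tailWRI⟩ := h
    refine ⟨swap_pow headz headw a ha, ?_⟩
    have hzw : WRI I [z, w] := ⟨headz, headw, trivial⟩
    have hswap : WRI (I ⊔ span {w}) (z :: L') := by
      refine ⟨?_, ?_⟩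
      · intro u hu
        have := hzw.colon u (by simpa [ofList_singleton] using hu)
        simpa [ofList_singleton] using this
      · rw [sup_right_comm]; exact tailWRI
    have := ih (I := I ⊔ span {w}) hswap
    rw [sup_right_comm] at this
    exact this

lemma WRI.map_pow {n : ℕ} (hn : 1 ≤ n) :
    ∀ {L : List R} {I : Ideal R}, WRI I L → WRI I (L.map (· ^ n)) := by
  intro L
  induction L with
  | nil => intro I _; trivial
  | cons z L' ih =>
    intro I h
    exact ⟨head_pow h.1 n, ih (h.pow_tail hn)⟩

open RingTheory.Sequence in
lemma IsWeaklyRegular.toWRI : ∀ {L : List R} {I : Ideal R},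
    (∀ i (h : i < L.length) (a : R),
      a * L[i] ∈ I ⊔ ofList (L.take i) → a ∈ I ⊔ ofList (L.take i)) → WRI I L := by
  intro L
  induction L with
  | nil => intro I _; trivial
  | cons z L' ih =>
    intro I h
    constructor
    · intro u hu
      have := h 0 (Nat.succ_pos _) u (by simpa using hu)
      simpa using this
    · refine ih fun i hi a ha => ?_
      have hrw : (I ⊔ span {z}) ⊔ ofList (L'.take i) = I ⊔ ofList ((z :: L').take (i + 1)) := by
        rw [List.take_succ_cons, ofList_cons, sup_assoc]
      rw [hrw] at ha ⊢
      exact h (i + 1) (by simpa using hi) a ha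

open RingTheory.Sequence in
lemma isWeaklyRegular_wri {L : List R} (h : IsWeaklyRegular R L) : WRI ⊥ L := by
  refine IsWeaklyRegular.toWRI fun i hi a ha => ?_
  have hq := h.regular_mod_prev i hi
  rw [isSMulRegular_quotient_iff_mem_of_smul_mem] at hq
  have hN : ∀ b : R, b ∈ (ofList (L.take i) • ⊤ : Submodule R R) ↔ b ∈ ofList (L.take i) := by
    intro b; rw [smul_eq_mul, mul_top]
  have := hq a (by rw [hN, smul_eq_mul, mul_comm]; simpa using ha)
  rw [hN] at this
  simpa using this

lemma ofList_ofFn {k : ℕ} (f : Fin k → R) :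
    ofList (List.ofFn f) = span (Set.range f) :=
  congrArg span (Set.ext fun a => List.mem_ofFn)

open RingTheory.Sequence in
lemma main_colon {d : ℕ} {x : Fin (d + 1) → R}
    (hreg : IsWeaklyRegular R (List.ofFn x)) {m n : ℕ} (hn : 1 ≤ n) (u : R)
    (hu : u * x 0 ^ m ∈ span (Set.range fun i : Fin d => x i.succ ^ n)) :
    u ∈ span (Set.range fun i : Fin d => x i.succ ^ n) := by
  set T : List R := List.ofFn fun i : Fin d => x i.succ with hT
  have hL : List.ofFn x = x 0 :: T := List.ofFn_succ
  have W0 : WRI (⊥ : Ideal R) (x 0 :: T) := hL ▸ isWeaklyRegular_wri hreg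
  have Wpow : WRI (⊥ : Ideal R) (x 0 ^ m :: T.map (· ^ n)) := by
    refine ⟨head_pow W0.1 m, ?_⟩
    rcases Nat.eq_zero_or_pos m with hm | hm
    · refine WRI_of_top _ ?_
      rw [hm, pow_zero, Ideal.span_singleton_one, sup_top_eq]
    · exact (W0.pow_tail hm).map_pow hn
  have hofList : ofList (T.map (· ^ n)) = span (Set.range fun i : Fin d => x i.succ ^ n) := by
    rw [hT, List.map_ofFn, ofList_ofFn]
    rfl
  have := Wpow.colon u (by rw [bot_sup_eq, hofList]; exact hu)
  rwa [bot_sup_eq, hofList] at this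

lemma frobPow_eq_map (p : ℕ) [Fact p.Prime] {R : Type*} [CommRing R] [CharP R p]
    (I : Ideal R) (e : ℕ) :
    frobPow I (p ^ e) = I.map (iterateFrobenius R p e) := by
  show Ideal.span _ = Ideal.span _
  congr 1

end Aux

open RingTheory.Sequence in
/-- Let `R` be a Noetherian ring of prime characteristic `p`,
`x₁, …, x_d` a regular sequence, `J ⊆ R` an ideal with `x₁ ∈ J`, and `c, r ∈ R`,
`e, t ≥ 1` integers such that
`c r^{pᵉ} (x₁ x₂ ⋯ x_d)^{(t-1)pᵉ} ∈ (x₁^{t-1} J, x₂ᵗ, …, x_dᵗ)^{[pᵉ]}`.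
Then `c r^{pᵉ} (x₂ ⋯ x_d)^{(t-1)pᵉ} ∈ (J, x₂ᵗ, …, x_dᵗ)^{[pᵉ]}`. -/
theorem statement14 (p : ℕ) [Fact p.Prime]
    (R : Type*) [CommRing R] [IsNoetherianRing R] [CharP R p]
    {d : ℕ} (x : Fin (d + 1) → R) (hreg : IsRegular R (List.ofFn x))
    (J : Ideal R) (hx1 : x 0 ∈ J) (c r : R) (e t : ℕ) (he : 1 ≤ e) (ht : 1 ≤ t)
    (hmem : c * r ^ p ^ e * (∏ i, x i) ^ ((t - 1) * p ^ e) ∈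
      frobPow (Ideal.span {x 0 ^ (t - 1)} * J ⊔
        Ideal.span (Set.range fun i : Fin d => x i.succ ^ t)) (p ^ e)) :
    c * r ^ p ^ e * (∏ i : Fin d, x i.succ) ^ ((t - 1) * p ^ e) ∈
      frobPow (J ⊔ Ideal.span (Set.range fun i : Fin d => x i.succ ^ t)) (p ^ e) := by
  set q := p ^ e with hq
  set φ := iterateFrobenius R p e with hφ
  set M := (t - 1) * q with hM
  set N := t * q with hN
  set Y := ∏ i : Fin d, x i.succ with hY
  set J' := J.map φ with hJ'
  set W : Ideal R := Ideal.span (Set.range fun i : Fin d => x i.succ ^ N) with hW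
  have hrange : (Ideal.span (Set.range fun i : Fin d => x i.succ ^ t)).map φ = W := by
    rw [Ideal.map_span, ← Set.range_comp]
    congr 1
    ext a
    constructor
    · rintro ⟨i, rfl⟩
      exact ⟨i, by simp [Function.comp, hφ, iterateFrobenius_def, ← pow_mul, hN, hq]⟩
    · rintro ⟨i, rfl⟩
      exact ⟨i, by simp [Function.comp, hφ, iterateFrobenius_def, ← pow_mul, hN, hq]⟩
  have hsing : (Ideal.span {x 0 ^ (t - 1)}).map φ = Ideal.span {x 0 ^ M} := by
    rw [Ideal.map_span, Set.image_singleton, hφ, iterateFrobenius_def, ← pow_mul]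
  rw [frobPow_eq_map, Ideal.map_sup, Ideal.map_mul, hsing, hrange] at hmem
  rw [frobPow_eq_map, Ideal.map_sup, hrange]
  -- decompose hmem
  obtain ⟨a, ha, w, hw, haw⟩ := Submodule.mem_sup.mp hmem
  obtain ⟨s, hs, hsa⟩ := Ideal.mem_span_singleton_mul.mp ha
  set u := c * r ^ q * Y ^ M - s with hu
  have hprod : (∏ i, x i) = x 0 * Y := by rw [hY, Fin.prod_univ_succ]
  have hkey : u * x 0 ^ M ∈ W := by
    have heq : u * x 0 ^ M = w := by
      have h1 : x 0 ^ M * s + w = c * r ^ q * (x 0 ^ M * Y ^ M) := by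
        rw [← mul_pow, ← hprod, ← haw, hsa]
      rw [hu]
      linear_combination -h1
    rw [heq]; exact hw
  have hN1 : 1 ≤ N := by
    have : 0 < q := by
      rw [hq]; exact Nat.pow_pos (Fact.out (p := p.Prime)).pos
    calc 1 ≤ t * 1 := by omega
    _ ≤ t * q := Nat.mul_le_mul_left t this
  have huW : u ∈ W := main_colon hreg.toIsWeaklyRegular hN1 u (hW ▸ hkey)
  have : c * r ^ q * Y ^ M = s + u := by rw [hu]; ring
  rw [this]
  exact Submodule.add_mem _ (Submodule.mem_sup_left hs) (Submodule.mem_sup_right huW)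
end
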